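/- Bretagnolle–Huber inequality: for probability measures P and Q on the same measurable space and any event G, P(G) + Q(Gᶜ) ≥ (1/2)·exp(−KL(P,Q)). -/
import Mathlib


open MeasureTheory
open scoped ENNReal Classical

/-- Kullback–Leibler divergence: `∫ log (dP/dQ) dP` when `P ≪ Q` and the log-likelihood
ratio is integrable, and `+∞` otherwise. -/
noncomputable def klDiv {Ω : Type*} [MeasurableSpace Ω] (P Q : Measure Ω) : ℝ≥0∞ :=
  if P ≪ Q ∧ Integrable (llr P Q) P then ENNReal.ofReal (∫ x, llr P Q x ∂P) else ⊤

/-- Bretagnolle–Huber inequality: for probability measures `P`, `Q` and any event `G`,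
`P(G) + Q(Gᶜ) ≥ (1/2)·exp(−KL(P,Q))` (stated via any finite upper bound `k ≥ KL(P,Q)`,
which is equivalent to the usual statement with the convention `exp(−∞) = 0`). -/
theorem bretagnolle_huber
    {Ω : Type*} [MeasurableSpace Ω] (P Q : Measure Ω)
    [IsProbabilityMeasure P] [IsProbabilityMeasure Q]
    (G : Set Ω) (hG : MeasurableSet G) :
    ∀ k : ℝ, 0 ≤ k → klDiv P Q ≤ ENNReal.ofReal k →
      (1 / 2 : ℝ) * Real.exp (-k) ≤ (P G).toReal + (Q Gᶜ).toReal := by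
  intro k hk hkl
  -- extract hypotheses from klDiv bound
  have hcond : P ≪ Q ∧ Integrable (llr P Q) P := by
    by_contra h
    rw [klDiv, if_neg h] at hkl
    exact ENNReal.ofReal_ne_top (top_le_iff.mp hkl)
  obtain ⟨hPQ, hllr⟩ := hcond
  rw [klDiv, if_pos ⟨hPQ, hllr⟩] at hkl
  have hint : ∫ x, llr P Q x ∂P ≤ k := (ENNReal.ofReal_le_ofReal_iff hk).mp hkl
  set f : Ω → ℝ≥0∞ := P.rnDeriv Q with hf
  have mf : Measurable f := Measure.measurable_rnDeriv P Q
  set M : ℝ≥0∞ := ∫⁻ x, min (f x) 1 ∂Q with hM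
  set N : ℝ≥0∞ := ∫⁻ x, max (f x) 1 ∂Q with hN
  set I : ℝ≥0∞ := ∫⁻ x, f x ^ (1/2 : ℝ) ∂Q with hI
  -- Step 1 : M ≤ P G + Q Gᶜ
  have h1 : M ≤ P G + Q Gᶜ := by
    rw [hM, ← lintegral_add_compl _ hG]
    gcongr
    · calc ∫⁻ x in G, min (f x) 1 ∂Q ≤ ∫⁻ x in G, f x ∂Q :=
            lintegral_mono fun x => min_le_left _ _
        _ = P G := Measure.setLIntegral_rnDeriv hPQ G
    · calc ∫⁻ x in Gᶜ, min (f x) 1 ∂Q ≤ ∫⁻ x in Gᶜ, 1 ∂Q :=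
            lintegral_mono fun x => min_le_right _ _
        _ = Q Gᶜ := by simp
  -- Step 2 : N ≤ 2
  have h2 : N ≤ 2 := by
    calc N ≤ ∫⁻ x, (f x + 1) ∂Q := lintegral_mono fun x => max_le le_self_add le_add_self
      _ = P Set.univ + Q Set.univ := by
          rw [lintegral_add_right _ measurable_const, Measure.lintegral_rnDeriv hPQ]
          simp
      _ = 2 := by simp; norm_num
  -- Step 3 : Cauchy-Schwarz : I ≤ M^(1/2) * N^(1/2)
  have h3 : I ≤ M ^ (1/2 : ℝ) * N ^ (1/2 : ℝ) := by
    have := ENNReal.lintegral_mul_norm_pow_le (μ := Q)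
      (f := fun x => min (f x) 1) (g := fun x => max (f x) 1)
      ((mf.min measurable_const).aemeasurable) ((mf.max measurable_const).aemeasurable)
      (by norm_num : (0:ℝ) ≤ 1/2) (by norm_num : (0:ℝ) ≤ 1/2) (by norm_num)
    refine le_trans (le_of_eq ?_) this
    refine lintegral_congr fun x => ?_
    rw [← ENNReal.mul_rpow_of_nonneg _ _ (by norm_num : (0:ℝ) ≤ 1/2), min_mul_max, mul_one]
  -- a.e. facts
  have hQfin : ∀ᵐ x ∂Q, f x < ∞ := Measure.rnDeriv_lt_top P Q
  have hPfin : ∀ᵐ x ∂P, f x < ∞ := hPQ.ae_le hQfin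
  have hPpos : ∀ᵐ x ∂P, 0 < f x := Measure.rnDeriv_pos hPQ
  -- Step 4a : I = ∫⁻ f^(-1/2) dP
  have h4a : I = ∫⁻ x, f x ^ (-(1/2) : ℝ) ∂P := by
    rw [hI, ← lintegral_rnDeriv_mul hPQ ((mf.pow_const _).aemeasurable :
      AEMeasurable (fun x => f x ^ (-(1/2) : ℝ)) Q)]
    refine lintegral_congr_ae ?_
    filter_upwards [hQfin] with x hx
    rcases eq_or_ne (f x) 0 with h0 | h0
    · simp [h0, show P.rnDeriv Q x = 0 from h0,
        ENNReal.zero_rpow_of_pos (by norm_num : (0:ℝ) < 1/2)]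
    · have hadd : f x ^ ((1:ℝ) + -(1/2)) = f x ^ (1:ℝ) * f x ^ (-(1/2) : ℝ) :=
        ENNReal.rpow_add _ _ h0 hx.ne
      rw [ENNReal.rpow_one] at hadd
      rw [← hadd]
      norm_num
  -- Step 4b : the integrand equals ofReal (exp (-(1/2) * llr))
  have h4b : ∀ᵐ x ∂P, f x ^ (-(1/2) : ℝ) = ENNReal.ofReal (Real.exp (-(1/2) * llr P Q x)) := by
    filter_upwards [hPfin, hPpos] with x hfin hpos
    have ht : 0 < (f x).toReal := ENNReal.toReal_pos hpos.ne' hfin.ne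
    rw [llr, mul_comm, ← Real.rpow_def_of_pos ht,
      ← ENNReal.ofReal_rpow_of_pos ht, ENNReal.ofReal_toReal hfin.ne]
  have h4c : I = ∫⁻ x, ENNReal.ofReal (Real.exp (-(1/2) * llr P Q x)) ∂P := by
    rw [h4a]; exact lintegral_congr_ae h4b
  -- Integrability of exp(-(1/2) llr)
  have hMne : M ≠ ∞ := (h1.trans_lt (by finiteness)).ne
  have hNne : N ≠ ∞ := (h2.trans_lt (by norm_num)).ne
  have hIfin : I < ∞ := h3.trans_lt (ENNReal.mul_lt_top
    (ENNReal.rpow_lt_top_of_nonneg (by norm_num) hMne)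
    (ENNReal.rpow_lt_top_of_nonneg (by norm_num) hNne))
  have hgint : Integrable (fun x => Real.exp (-(1/2) * llr P Q x)) P := by
    refine ⟨(Real.measurable_exp.comp ((measurable_llr P Q).const_mul _)).aestronglyMeasurable, ?_⟩
    rw [hasFiniteIntegral_iff_ofReal (Filter.Eventually.of_forall fun x => (Real.exp_pos _).le)]
    rw [← h4c]; exact hIfin
  -- Jensen
  have hjensen : Real.exp (∫ x, -(1/2) * llr P Q x ∂P) ≤ ∫ x, Real.exp (-(1/2) * llr P Q x) ∂P := by
    have := (convexOn_exp).map_integral_le (μ := P) (f := fun x => -(1/2) * llr P Q x)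
      Real.continuous_exp.continuousOn isClosed_univ
      (Filter.Eventually.of_forall fun x => Set.mem_univ _) (hllr.const_mul _) ?_
    · exact this
    · exact hgint
  have h4 : ENNReal.ofReal (Real.exp (-(1/2) * k)) ≤ I := by
    rw [h4c, ← ofReal_integral_eq_lintegral_ofReal hgint
        (Filter.Eventually.of_forall fun x => (Real.exp_pos _).le)]
    apply ENNReal.ofReal_le_ofReal
    refine le_trans ?_ hjensen
    rw [integral_const_mul]
    apply Real.exp_le_exp.mpr
    nlinarith [hint]
  -- Combine
  have hsq : (ENNReal.ofReal (Real.exp (-(1/2) * k))) ^ (2:ℝ) ≤ M * N := by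
    calc (ENNReal.ofReal (Real.exp (-(1/2) * k))) ^ (2:ℝ)
        ≤ (M ^ (1/2:ℝ) * N ^ (1/2:ℝ)) ^ (2:ℝ) := by gcongr; exact h4.trans h3
      _ = M * N := by
          rw [ENNReal.mul_rpow_of_nonneg _ _ (by norm_num : (0:ℝ) ≤ 2),
            ← ENNReal.rpow_mul, ← ENNReal.rpow_mul]
          norm_num
  have h5 : ENNReal.ofReal (Real.exp (-k)) ≤ (P G + Q Gᶜ) * 2 := by
    refine le_trans (le_of_eq ?_) (hsq.trans (mul_le_mul' h1 h2))
    rw [ENNReal.ofReal_rpow_of_pos (Real.exp_pos _), ← Real.exp_one_rpow (-(1/2)*k),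
      ← Real.rpow_mul (Real.exp_pos 1).le, Real.exp_one_rpow,
      show -(1/2)*k*2 = -k by ring]
  have h6 := ENNReal.toReal_mono (by finiteness) h5
  rw [ENNReal.toReal_ofReal (Real.exp_pos _).le, ENNReal.toReal_mul,
    ENNReal.toReal_add (by finiteness) (by finiteness)] at h6
  simp only [ENNReal.toReal_ofNat] at h6
  linarith
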